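/- arXiv:1611.09148 — 5 statements merged into one kernel-verified Lean document; each statement's English description precedes it below -/
import Mathlib

section
/- Let (f : A → B, s : B → A) be a Schreier split epimorphism of monoids with Schreier retraction q. Define φ : B → (ker f → ker f) by φ(b)(x) = q(s(b) + x). Then for each b ∈ B, φ(b) is a monoid endomorphism of ker f, and φ : B → End(ker f) is a monoid homomorphism (where End(ker f) has composition as multiplication and the identity as unit). -/
/-- for a Schreier split epimorphism of monoids, `φ b x = q (s b + x)`
defines, for each `b`, a monoid endomorphism of `ker f`, and `φ : B → End (ker f)` is a
monoid homomorphism (composition as multiplication, identity as unit). -/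
theorem schreier_action_is_monoid_hom_into_End
    {A B : Type*} [AddMonoid A] [AddMonoid B]
    (f : A →+ B) (s : B →+ A) (hfs : ∀ b : B, f (s b) = b)
    (q : A → A)
    (hq0 : ∀ a : A, f (q a) = 0)
    (hq : ∀ a : A, a = q a + s (f a))
    (huniq : ∀ a α : A, f α = 0 → a = α + s (f a) → α = q a) :
    -- φ b maps ker f to ker f
    (∀ b : B, ∀ x : A, f x = 0 → f (q (s b + x)) = 0) ∧
    -- φ b is a monoid endomorphism of ker f
    (∀ b : B, q (s b + 0) = 0) ∧
    (∀ b : B, ∀ x y : A, f x = 0 → f y = 0 →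
      q (s b + (x + y)) = q (s b + x) + q (s b + y)) ∧
    -- φ is a monoid homomorphism B → End(ker f)
    (∀ x : A, f x = 0 → q (s 0 + x) = x) ∧
    (∀ b₁ b₂ : B, ∀ x : A, f x = 0 →
      q (s (b₁ + b₂) + x) = q (s b₁ + q (s b₂ + x))) := by
  refine ⟨fun b x _ => hq0 _, ?_, ?_, ?_, ?_⟩
  · intro b
    rw [add_zero]
    exact (huniq (s b) 0 (map_zero f) (by rw [zero_add, hfs])).symm
  · intro b x y hx hy
    refine (huniq (s b + (x + y)) _ (by rw [map_add, hq0, hq0, add_zero]) ?_).symm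
    have h1 : s b + x = q (s b + x) + s b := by
      conv_lhs => rw [hq (s b + x)]
      rw [map_add, hfs, hx, add_zero]
    have h2 : s b + y = q (s b + y) + s b := by
      conv_lhs => rw [hq (s b + y)]
      rw [map_add, hfs, hy, add_zero]
    simp only [map_add, hfs, hx, hy, add_zero]
    conv_lhs => rw [← add_assoc, h1, add_assoc, h2, ← add_assoc]
  · intro x hx
    rw [map_zero, zero_add]
    exact (huniq x x hx (by rw [hx, map_zero, add_zero])).symm
  · intro b₁ b₂ x hx
    refine (huniq (s (b₁ + b₂) + x) _ (hq0 _) ?_).symm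
    have h2 : s b₂ + x = q (s b₂ + x) + s b₂ := by
      conv_lhs => rw [hq (s b₂ + x)]
      rw [map_add, hfs, hx, add_zero]
    have h1 : s b₁ + q (s b₂ + x) = q (s b₁ + q (s b₂ + x)) + s b₁ := by
      conv_lhs => rw [hq (s b₁ + q (s b₂ + x))]
      rw [map_add, hfs, hq0, add_zero]
    simp only [map_add, hfs, hx, add_zero]
    conv_lhs => rw [add_assoc, h2, ← add_assoc, h1, add_assoc]
end

section
/- Schreier split epimorphisms of monoids are stable under pullback: if (f : A → B, s : B → A) is a Schreier split epimorphism and h : E → B is any monoid homomorphism, then the pullback projection A ×_B E → E with its induced section e ↦ (s(h(e)), e) is again a Schreier split epimorphism. -/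
/-- Schreier split epimorphisms of monoids are stable under pullback:
the pullback `A ×_B E → E` of a Schreier split epimorphism `(f, s)` along any
`h : E → B`, with the induced section `e ↦ (s (h e), e)`, is again Schreier. -/
theorem schreier_stable_under_pullback
    {A B E : Type*} [AddMonoid A] [AddMonoid B] [AddMonoid E]
    (f : A →+ B) (s : B →+ A) (hfs : ∀ b : B, f (s b) = b)
    (hSch : ∀ a : A, ∃! α : A, f α = 0 ∧ a = α + s (f a))
    (h : E →+ B) :
    -- the induced section lands in the pullback
    (∀ e : E, f (s (h e)) = h e) ∧
    -- the pullback projection with its induced section is a Schreier split epimorphism: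
    -- its kernel consists of the elements (α, 0) of the pullback with f α = 0
    (∀ u : {p : A × E // f p.1 = h p.2},
      ∃! v : {p : A × E // f p.1 = h p.2},
        v.val.2 = 0 ∧ u.val = (v.val.1 + s (h u.val.2), v.val.2 + u.val.2)) := by
  refine ⟨fun e => hfs (h e), fun u => ?_⟩
  obtain ⟨⟨a, e⟩, hu⟩ := u
  obtain ⟨α, ⟨hα0, hαeq⟩, huniq⟩ := hSch a
  refine ⟨⟨(α, 0), by simp [hα0]⟩, ⟨rfl, ?_⟩, ?_⟩
  · simp only [zero_add]
    ext
    · simpa [← hu] using hαeq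
    · rfl
  · rintro ⟨⟨β, e'⟩, hw⟩ ⟨h1, h2⟩
    simp only at h1 h2
    subst h1
    have hβ0 : f β = 0 := by simpa using hw
    have : β = α := by
      apply huniq
      refine ⟨hβ0, ?_⟩
      have := congrArg Prod.fst h2
      simpa [hu] using this
    simp [this]
end

section
/- Every Schreier split epimorphism of monoids is a strong point: if (f : A → B, s : B → A) is a Schreier split epimorphism with kernel inclusion k : ker f → A, then k and s are jointly strongly epimorphic, i.e., the only submonoid of A containing both the image of k and the image of s is A itself. -/
/-- every Schreier split epimorphism of monoids is a strong point: the
kernel inclusion `k` and the section `s` are jointly strongly epimorphic, i.e. the only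
submonoid of `A` containing the image of `k` and the image of `s` is `A` itself. -/
theorem schreier_is_strong_point
    {A B : Type*} [AddMonoid A] [AddMonoid B]
    (f : A →+ B) (s : B →+ A) (hfs : ∀ b : B, f (s b) = b)
    (hSch : ∀ a : A, ∃! α : A, f α = 0 ∧ a = α + s (f a)) :
    ∀ M : AddSubmonoid A, (∀ x : A, f x = 0 → x ∈ M) → (∀ b : B, s b ∈ M) → M = ⊤ := by
  intro M hk hs
  ext a
  simp only [AddSubmonoid.mem_top, iff_true]
  obtain ⟨α, ⟨hα0, ha⟩, _⟩ := hSch a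
  rw [ha]
  exact M.add_mem (hk α hα0) (hs _)
end

section
/- The Split Short Five Lemma holds for Schreier split epimorphisms of monoids: given a morphism (g, h) of Schreier split epimorphisms from (f : A → B, s) to (f' : A' → B', s') (i.e., monoid homomorphisms g : A → A', h : B → B' with h ∘ f = f' ∘ g and g ∘ s = s' ∘ h), if h is an isomorphism and the restriction of g to the kernels, ker f → ker f', is an isomorphism, then g is an isomorphism. -/
/-- the Split Short Five Lemma for Schreier split epimorphisms of monoids:
if `(g, h)` is a morphism of Schreier split epimorphisms, `h` is an isomorphism and the
restriction of `g` to the kernels is an isomorphism, then `g` is an isomorphism. -/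
theorem split_short_five_lemma_schreier
    {A B A' B' : Type*} [AddMonoid A] [AddMonoid B] [AddMonoid A'] [AddMonoid B']
    (f : A →+ B) (s : B →+ A) (hfs : ∀ b : B, f (s b) = b)
    (hSch : ∀ a : A, ∃! α : A, f α = 0 ∧ a = α + s (f a))
    (f' : A' →+ B') (s' : B' →+ A') (hfs' : ∀ b : B', f' (s' b) = b)
    (hSch' : ∀ a : A', ∃! α : A', f' α = 0 ∧ a = α + s' (f' a))
    (g : A →+ A') (h : B →+ B')
    (hsq1 : ∀ a : A, h (f a) = f' (g a))
    (hsq2 : ∀ b : B, g (s b) = s' (h b))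
    (hbij : Function.Bijective h)
    (hker_inj : ∀ x₁ x₂ : A, f x₁ = 0 → f x₂ = 0 → g x₁ = g x₂ → x₁ = x₂)
    (hker_surj : ∀ y : A', f' y = 0 → ∃ x : A, f x = 0 ∧ g x = y) :
    Function.Bijective g := by
  constructor
  · intro a₁ a₂ hgeq
    have hfeq : f a₁ = f a₂ := hbij.1 (by rw [hsq1, hsq1, hgeq])
    obtain ⟨α₁, ⟨hα₁0, hα₁⟩, _⟩ := hSch a₁
    obtain ⟨α₂, ⟨hα₂0, hα₂⟩, _⟩ := hSch a₂
    obtain ⟨β, _, huniq⟩ := hSch' (g a₁)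
    have key : ∀ (a : A) (α : A), f α = 0 → a = α + s (f a) →
        g a = g α + s' (f' (g a)) ∧ f' (g α) = 0 := by
      intro a α h0 ha
      constructor
      · conv_lhs => rw [ha]
        rw [map_add, hsq2, hsq1]
      · rw [← hsq1, h0, map_zero]
    obtain ⟨e₁, k₁⟩ := key a₁ α₁ hα₁0 hα₁
    obtain ⟨e₂, k₂⟩ := key a₂ α₂ hα₂0 hα₂
    have hb₁ : g α₁ = β := huniq _ ⟨k₁, e₁⟩
    have hb₂ : g α₂ = β := huniq _ ⟨k₂, by rw [hgeq]; exact e₂⟩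
    have : α₁ = α₂ := hker_inj _ _ hα₁0 hα₂0 (hb₁.trans hb₂.symm)
    rw [hα₁, hα₂, this, hfeq]
  · intro a'
    obtain ⟨α', ⟨hα'0, hα'⟩, _⟩ := hSch' a'
    obtain ⟨b, hb⟩ := hbij.2 (f' a')
    obtain ⟨x, hx0, hxg⟩ := hker_surj α' hα'0
    exact ⟨x + s b, by rw [map_add, hsq2, hb, hxg, ← hα']⟩
end

section
/- If B is a (unital or non-unital) ring with B ≠ 0, regarded as a semiring, then every split epimorphism of semirings with codomain B is a Schreier split epimorphism. -/
/-- if `B` is a (possibly non-unital) ring with `B ≠ 0`, regarded as a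
semiring, then every split epimorphism of semirings with codomain `B` is a Schreier
split epimorphism. -/
theorem split_epi_over_ring_is_schreier
    {A B : Type*} [NonUnitalSemiring A] [NonUnitalRing B]
    (hB : ∃ b : B, b ≠ 0)
    (f : A →ₙ+* B) (s : B →ₙ+* A) (hfs : ∀ b : B, f (s b) = b) :
    ∀ a : A, ∃! α : A, f α = 0 ∧ a = α + s (f a) := by
  intro a
  refine ⟨a + s (-(f a)), ⟨?_, ?_⟩, ?_⟩
  · simp [map_add, hfs]
  · rw [add_assoc, ← map_add, neg_add_cancel, map_zero, add_zero]
  · rintro α ⟨hα, ha⟩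
    have h : α + s (f a) + s (-(f a)) = α := by
      rw [add_assoc, ← map_add, add_neg_cancel, map_zero, add_zero]
    rw [← h, ← ha]
end
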